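/- Assume (H1), (H2⁰) and K·L < α. Then for every τ ∈ I the maps H(τ,·) and G(τ,·) are mutually inverse bijections of X: H(τ, G(τ,η)) = η for all η ∈ X and G(τ, H(τ,ξ)) = ξ for all ξ ∈ X. -/

import Mathlib

open Set MeasureTheory Real


private lemma glue_aux {β : Type*} [NormedAddCommGroup β] {g : ℝ → ℝ} (hg : Measurable g)
    {S : Set ℝ} (hS : S.Countable) (hgS : ∀ t, g t ∈ S)
    {h : ℝ → ℝ → β} (hh : ∀ s, StronglyMeasurable (h s)) :
    StronglyMeasurable fun t => h (g t) t := by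
  borelize β
  haveI := hS.to_subtype
  have hmeas : StronglyMeasurable fun p : S × ℝ => h (↑p.1) p.2 := by
    rw [stronglyMeasurable_iff_measurable_separable]
    constructor
    · have heq : (fun p : S × ℝ => h (↑p.1) p.2)
        = (fun p : ℝ × S => h (↑p.2) p.1) ∘ Prod.swap := rfl
      rw [heq, measurable_swap_iff]
      exact measurable_from_prod_countable_left fun s => (hh s).measurable
    · have hsep : TopologicalSpace.IsSeparable (⋃ s : S, Set.range (h ↑s)) :=
        TopologicalSpace.IsSeparable.iUnion fun s => (hh ↑s).isSeparable_range
      apply hsep.mono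
      rintro _ ⟨⟨s, t⟩, rfl⟩
      exact Set.mem_iUnion.2 ⟨s, Set.mem_range_self _⟩
  have heq2 : (fun t => h (g t) t)
      = (fun p : S × ℝ => h (↑p.1) p.2) ∘ fun t => (⟨g t, hgS t⟩, t) := rfl
  rw [heq2]
  exact hmeas.comp_measurable ((hg.subtype_mk).prodMk measurable_id)

private lemma caratheodory_sm {X : Type*} [NormedAddCommGroup X]
    {F : ℝ → X → X} (hFm : ∀ x, StronglyMeasurable fun t => F t x)
    (hFc : ∀ t, Continuous (F t)) {v : ℝ → X} (hv : Continuous v) :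
    StronglyMeasurable fun t => F t (v t) := by
  set q : ℕ → ℝ → ℝ := fun n t => (⌈t * 2 ^ n⌉ : ℤ) / 2 ^ n with hq
  have hmeas : ∀ n, StronglyMeasurable fun t => F t (v (q n t)) := by
    intro n
    refine glue_aux (h := fun s t => F t (v s)) ?_
      (Set.countable_range fun k : ℤ => (k : ℝ) / 2 ^ n) ?_ (fun s => hFm (v s))
    · exact (measurable_from_top.comp ((measurable_id.mul_const _).ceil)).div_const _
    · exact fun t => ⟨⌈t * 2 ^ n⌉, rfl⟩
  refine stronglyMeasurable_of_tendsto Filter.atTop hmeas ?_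
  rw [tendsto_pi_nhds]
  intro t
  have hqt : Filter.Tendsto (fun n => q n t) Filter.atTop (nhds t) := by
    have hsub : Filter.Tendsto (fun n => q n t - t) Filter.atTop (nhds 0) := by
      apply squeeze_zero (fun n => ?_) (fun n => ?_)
        (tendsto_pow_atTop_nhds_zero_of_lt_one (by norm_num) (by norm_num : (1/2:ℝ) < 1))
      · have h2 : (0:ℝ) < 2 ^ n := by positivity
        have := Int.le_ceil (t * 2 ^ n)
        rw [hq]
        simp only []
        rw [sub_nonneg, le_div_iff₀ h2]
        exact this
      · have h2 : (0:ℝ) < 2 ^ n := by positivity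
        have hc := Int.ceil_lt_add_one (t * 2 ^ n)
        rw [hq]
        simp only []
        rw [one_div, inv_pow, sub_le_iff_le_add, div_le_iff₀ h2]
        have : ((2:ℝ) ^ n)⁻¹ * 2 ^ n = 1 := inv_mul_cancel₀ (ne_of_gt h2)
        nlinarith [hc]
    have := hsub.add_const t
    simpa using this
  exact ((hFc t).tendsto (v t)).comp ((hv.tendsto t).comp hqt)

theorem statement8
    {X : Type*} [NormedAddCommGroup X] [NormedSpace ℝ X] [CompleteSpace X]
    (τ₀ : ℝ)
    (Nt : ℝ → X → ℝ)
    (hNadd : ∀ t : ℝ, ∀ x y : X, Nt t (x + y) ≤ Nt t x + Nt t y)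
    (hNsmul : ∀ t : ℝ, ∀ c : ℝ, ∀ x : X, Nt t (c • x) = |c| * Nt t x)
    (ℓ : ℝ → ℝ)
    (hℓpos : ∀ t ∈ Set.Ici τ₀, 0 < ℓ t)
    (hℓloc : ∀ a b : ℝ, ∃ C : ℝ, ∀ t ∈ Set.Icc a b ∩ Set.Ici τ₀, ℓ t ≤ C)
    (hNequiv : ∀ t ∈ Set.Ici τ₀, ∀ x : X, (1 / ℓ t) * ‖x‖ ≤ Nt t x ∧ Nt t x ≤ ℓ t * ‖x‖)
    (Φ : ℝ → ℝ → X →L[ℝ] X)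
    (hΦcont : ContinuousOn (fun p : ℝ × ℝ => Φ p.1 p.2) (Set.Ici τ₀ ×ˢ Set.Ici τ₀))
    (hΦid : ∀ t ∈ Set.Ici τ₀, Φ t t = ContinuousLinearMap.id ℝ X)
    (hΦcomp : ∀ t ∈ Set.Ici τ₀, ∀ r ∈ Set.Ici τ₀, ∀ s ∈ Set.Ici τ₀,
      Φ t s = (Φ t r).comp (Φ r s))
    (K α : ℝ) (hK : 1 ≤ K) (hα : 0 < α)
    (hH1 : ∀ s ∈ Set.Ici τ₀, ∀ t ∈ Set.Ici τ₀, s ≤ t → ∀ x : X,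
      Nt t (Φ t s x) ≤ K * Real.exp (-α * (t - s)) * Nt s x)
    (F : ℝ → X → X)
    (hFmeas : ∀ x : X, StronglyMeasurable (fun t => F t x))
    (hFcont : ∀ᵐ t ∂(volume.restrict (Set.Ici τ₀)), Continuous (F t))
    (L M : ℝ) (hL : 0 ≤ L) (hM : 0 ≤ M)
    (hH2 : ∀ᵐ t ∂(volume.restrict (Set.Ici τ₀)),
      F t 0 = 0 ∧ (∀ x : X, Nt t (F t x) ≤ M) ∧
        (∀ x y : X, Nt t (F t x - F t y) ≤ L * Nt t (x - y)))
    (sol : ℝ → ℝ → X → X)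
    (hsolCont : ContinuousOn (fun p : ℝ × ℝ × X => sol p.1 p.2.1 p.2.2)
      (Set.Ici τ₀ ×ˢ Set.Ici τ₀ ×ˢ (Set.univ : Set X)))
    (hsolId : ∀ τ ∈ Set.Ici τ₀, ∀ x : X, sol τ τ x = x)
    (hsolGrp : ∀ t₀ ∈ Set.Ici τ₀, ∀ t₁ ∈ Set.Ici τ₀, ∀ t₂ ∈ Set.Ici τ₀, ∀ x : X,
      sol t₂ t₀ x = sol t₂ t₁ (sol t₁ t₀ x))
    (hVOC : ∀ s ∈ Set.Ici τ₀, ∀ t ∈ Set.Ici τ₀, ∀ η : X,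
      sol t s η = Φ t s η + ∫ r in s..t, Φ t r (F r (sol r s η)))
    (huniq : ∀ τ ∈ Set.Ici τ₀, ∀ x : ℝ → X, ContinuousOn x (Set.Ici τ₀) →
      (∀ t ∈ Set.Ici τ₀, x t = Φ t τ (x τ) + ∫ r in τ..t, Φ t r (F r (x r))) →
      ∀ t ∈ Set.Ici τ₀, x t = sol t τ (x τ))
    (hKL : K * L < α)
    (φstar : ℝ → X → ℝ → X)
    (hφstarBC : ∀ τ ∈ Set.Ici τ₀, ∀ ξ : X, ContinuousOn (φstar τ ξ) (Set.Ici τ₀) ∧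
      ∃ C : ℝ, ∀ t ∈ Set.Ici τ₀, Nt t (φstar τ ξ t) ≤ C)
    (hφstarFix : ∀ τ ∈ Set.Ici τ₀, ∀ ξ : X, ∀ t ∈ Set.Ici τ₀,
      φstar τ ξ t = ∫ s in τ₀..t, Φ t s (F s (φstar τ ξ s + Φ s τ ξ)))
    (hφstarUniq : ∀ τ ∈ Set.Ici τ₀, ∀ ξ : X, ∀ ψ : ℝ → X, ContinuousOn ψ (Set.Ici τ₀) →
      (∃ C : ℝ, ∀ t ∈ Set.Ici τ₀, Nt t (ψ t) ≤ C) →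
      (∀ t ∈ Set.Ici τ₀, ψ t = ∫ s in τ₀..t, Φ t s (F s (ψ s + Φ s τ ξ))) →
      ∀ t ∈ Set.Ici τ₀, ψ t = φstar τ ξ t)
    :
    ∀ τ ∈ Set.Ici τ₀,
      (∀ η : X,
        (η - ∫ s in τ₀..τ, Φ τ s (F s (sol s τ η)))
          + φstar τ (η - ∫ s in τ₀..τ, Φ τ s (F s (sol s τ η))) τ = η) ∧
      (∀ ξ : X,
        (ξ + φstar τ ξ τ)
          - ∫ s in τ₀..τ, Φ τ s (F s (sol s τ (ξ + φstar τ ξ τ))) = ξ) := by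
  classical
  intro τ hτ
  have hτ₀ : τ₀ ∈ Set.Ici τ₀ := Set.self_mem_Ici
  have hττ : τ₀ ≤ τ := hτ
  set μI := volume.restrict (Set.Ici τ₀) with hμI
  have hae := hFcont.and hH2
  set B : Set ℝ := {t | ¬ (Continuous (F t) ∧ (F t 0 = 0 ∧ (∀ x : X, Nt t (F t x) ≤ M) ∧
      ∀ x y : X, Nt t (F t x - F t y) ≤ L * Nt t (x - y)))} with hB
  have hBnull : μI B = 0 := ae_iff.mp hae
  set N := toMeasurable μI B with hNdef
  have hNmeas : MeasurableSet N := measurableSet_toMeasurable _ _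
  have hNnull : μI N = 0 := by rw [hNdef, measure_toMeasurable]; exact hBnull
  set F' : ℝ → X → X := fun t x => if t ∈ N then 0 else F t x with hF'
  have hgood : ∀ t ∉ N, Continuous (F t) ∧ (F t 0 = 0 ∧ (∀ x : X, Nt t (F t x) ≤ M) ∧
      ∀ x y : X, Nt t (F t x - F t y) ≤ L * Nt t (x - y)) := by
    intro t ht
    by_contra hc
    exact ht (subset_toMeasurable _ _ hc)
  have hF'm : ∀ x : X, StronglyMeasurable fun t => F' t x := by
    intro x
    have heq : (fun t => F' t x) = N.piecewise (fun _ => (0 : X)) (fun t => F t x) := rfl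
    rw [heq]
    exact stronglyMeasurable_const.piecewise hNmeas (hFmeas x)
  have hF'c : ∀ t, Continuous (F' t) := by
    intro t
    by_cases ht : t ∈ N
    · simpa [hF', ht] using continuous_const
    · have hc := (hgood t ht).1
      simpa [hF', ht] using hc
  have hNt0 : ∀ t, Nt t (0 : X) = 0 := by
    intro t
    have h := hNsmul t 0 0
    simpa using h
  have hF'normbd : ∀ t ∈ Set.Ici τ₀, ∀ y : X, ‖F' t y‖ ≤ ℓ t * M := by
    intro t ht y
    have hNtbd : Nt t (F' t y) ≤ M := by
      by_cases htN : t ∈ N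
      · simp only [hF', if_pos htN]
        rw [hNt0]; exact hM
      · simp only [hF', if_neg htN]
        exact (hgood t htN).2.2.1 y
    have h1 := (hNequiv t ht (F' t y)).1
    have hp := hℓpos t ht
    have h2 := mul_le_mul_of_nonneg_left h1 hp.le
    rw [show ℓ t * (1 / ℓ t * ‖F' t y‖) = ‖F' t y‖ by field_simp] at h2
    calc ‖F' t y‖ ≤ ℓ t * Nt t (F' t y) := h2
      _ ≤ ℓ t * M := mul_le_mul_of_nonneg_left hNtbd hp.le
  have hΦrow : ∀ t ∈ Set.Ici τ₀, ContinuousOn (fun s => Φ t s) (Set.Ici τ₀) := by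
    intro t ht
    exact hΦcont.comp ((continuous_const.prodMk continuous_id).continuousOn)
      (fun s hs => ⟨ht, hs⟩)
  have hΦcol : ContinuousOn (fun s => Φ s τ) (Set.Ici τ₀) :=
    hΦcont.comp ((continuous_id.prodMk continuous_const).continuousOn)
      (fun s hs => ⟨hs, hτ⟩)
  -- Main construction, for each ξ
  have key : ∀ ξ : X, (ξ + φstar τ ξ τ)
      - ∫ s in τ₀..τ, Φ τ s (F s (sol s τ (ξ + φstar τ ξ τ))) = ξ := by
    intro ξ
    set x₀ : ℝ → X := fun s => φstar τ ξ s + Φ s τ ξ with hx₀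
    set x : ℝ → X := fun s => x₀ (max s τ₀) with hx
    have hcontx₀ : ContinuousOn x₀ (Set.Ici τ₀) :=
      ((hφstarBC τ hτ ξ).1).add (hΦcol.clm_apply continuousOn_const)
    have hcontx : Continuous x :=
      hcontx₀.comp_continuous (continuous_id.max continuous_const)
        (fun s => Set.mem_Ici.2 (le_max_right _ _))
    have hxeq : ∀ s ∈ Set.Ici τ₀, x s = x₀ s := by
      intro s hs
      simp only [hx]
      rw [max_eq_left hs]
    have hInt : ∀ t ∈ Set.Ici τ₀, ∀ c ∈ Set.Ici τ₀, ∀ d ∈ Set.Ici τ₀,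
        IntervalIntegrable (fun s => Φ t s (F s (x₀ s))) volume c d := by
      intro t ht c hc d hd
      rw [intervalIntegrable_iff]
      have hsub : Set.uIoc c d ⊆ Set.Icc (min c d) (max c d) := Set.Ioc_subset_Icc_self
      have hsub' : Set.Icc (min c d) (max c d) ⊆ Set.Ici τ₀ :=
        fun s hs => le_trans (le_min hc hd) hs.1
      have hsm : StronglyMeasurable fun s => F' s (x s) :=
        caratheodory_sm hF'm hF'c hcontx
      haveI : SecondCountableTopologyEither ℝ (X →L[ℝ] X) :=
        secondCountableTopologyEither_of_left ℝ _
      have hΦaesm : AEStronglyMeasurable (fun s => Φ t s)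
          (volume.restrict (Set.uIoc c d)) := by
        refine ContinuousOn.aestronglyMeasurable ?_ measurableSet_uIoc
        exact (hΦrow t ht).mono (Set.Subset.trans hsub hsub')
      have haesm : AEStronglyMeasurable (fun s => Φ t s (F' s (x s)))
          (volume.restrict (Set.uIoc c d)) := by
        have hpair := hΦaesm.prodMk hsm.aestronglyMeasurable
        exact isBoundedBilinearMap_apply.continuous.comp_aestronglyMeasurable hpair
      obtain ⟨CΦ, hCΦ⟩ := (isCompact_Icc (a := min c d)
        (b := max c d)).exists_bound_of_continuousOn ((hΦrow t ht).mono hsub')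
      obtain ⟨Cℓ, hCℓ⟩ := hℓloc (min c d) (max c d)
      have hbound : ∀ s ∈ Set.uIoc c d, ‖Φ t s (F' s (x s))‖ ≤ |CΦ| * (|Cℓ| * M) := by
        intro s hs
        have hs' := hsub hs
        have hsI := hsub' hs'
        have h1 : ‖Φ t s (F' s (x s))‖ ≤ ‖Φ t s‖ * ‖F' s (x s)‖ := (Φ t s).le_opNorm _
        have h2 : ‖F' s (x s)‖ ≤ ℓ s * M := hF'normbd s hsI _
        have h3 : ℓ s ≤ |Cℓ| := le_trans (hCℓ s ⟨hs', hsI⟩) (le_abs_self _)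
        have h4 : ‖Φ t s‖ ≤ |CΦ| := le_trans (hCΦ s hs') (le_abs_self _)
        have hl0 : 0 ≤ ℓ s := (hℓpos s hsI).le
        calc ‖Φ t s (F' s (x s))‖ ≤ ‖Φ t s‖ * ‖F' s (x s)‖ := h1
          _ ≤ |CΦ| * (|Cℓ| * M) := by
              refine mul_le_mul h4 (le_trans h2 ?_) (norm_nonneg _) (abs_nonneg _)
              exact mul_le_mul_of_nonneg_right h3 hM
      have hint' : IntegrableOn (fun s => Φ t s (F' s (x s))) (Set.uIoc c d) volume := by
        refine Integrable.mono' (g := fun _ => |CΦ| * (|Cℓ| * M)) ?_ haesm ?_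
        · exact integrableOn_const measure_Ioc_lt_top.ne
        · exact (ae_restrict_iff' measurableSet_uIoc).2 (Filter.Eventually.of_forall hbound)
      refine hint'.congr ?_
      have hNnull' : volume.restrict (Set.uIoc c d) N = 0 := by
        rw [Measure.restrict_apply hNmeas]
        have hle : volume (N ∩ Set.uIoc c d) ≤ μI N := by
          rw [hμI, Measure.restrict_apply hNmeas]
          exact measure_mono (Set.inter_subset_inter_right _ (Set.Subset.trans hsub hsub'))
        rw [hNnull] at hle
        exact le_zero_iff.mp hle
      have haeN : ∀ᵐ s ∂(volume.restrict (Set.uIoc c d)), s ∉ N := by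
        rw [ae_iff]
        simpa using hNnull'
      have haeuIoc : ∀ᵐ s ∂(volume.restrict (Set.uIoc c d)), s ∈ Set.uIoc c d :=
        ae_restrict_mem measurableSet_uIoc
      filter_upwards [haeN, haeuIoc] with s hsN hsIoc
      have hsI : s ∈ Set.Ici τ₀ := hsub' (hsub hsIoc)
      simp only [hF', if_neg hsN]
      rw [hxeq s hsI]
    have hFixt : ∀ t ∈ Set.Ici τ₀, φstar τ ξ t = ∫ s in τ₀..t, Φ t s (F s (x₀ s)) := by
      intro t ht
      exact hφstarFix τ hτ ξ t ht
    have hx₀τ : x₀ τ = φstar τ ξ τ + ξ := by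
      simp only [hx₀]
      rw [hΦid τ hτ]
      rfl
    have hmain : ∀ t ∈ Set.Ici τ₀, x₀ t = Φ t τ (x₀ τ) + ∫ r in τ..t, Φ t r (F r (x₀ r)) := by
      intro t ht
      have hsplit := intervalIntegral.integral_add_adjacent_intervals
        (hInt t ht τ₀ hτ₀ τ hτ) (hInt t ht τ hτ t ht)
      have hpull : Φ t τ (∫ s in τ₀..τ, Φ τ s (F s (x₀ s)))
          = ∫ s in τ₀..τ, Φ t s (F s (x₀ s)) := by
        rw [← ContinuousLinearMap.intervalIntegral_comp_comm _ (hInt τ hτ τ₀ hτ₀ τ hτ)]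
        apply intervalIntegral.integral_congr
        intro s hs
        have hs' : s ∈ Set.Icc τ₀ τ := by rwa [Set.uIcc_of_le hττ] at hs
        have hsI : s ∈ Set.Ici τ₀ := hs'.1
        show (Φ t τ) ((Φ τ s) (F s (x₀ s))) = (Φ t s) (F s (x₀ s))
        rw [hΦcomp t ht τ hτ s hsI]
        rfl
      calc x₀ t = φstar τ ξ t + Φ t τ ξ := rfl
        _ = (∫ s in τ₀..t, Φ t s (F s (x₀ s))) + Φ t τ ξ := by rw [← hFixt t ht]
        _ = ((∫ s in τ₀..τ, Φ t s (F s (x₀ s)))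
              + ∫ s in τ..t, Φ t s (F s (x₀ s))) + Φ t τ ξ := by rw [hsplit]
        _ = (Φ t τ (∫ s in τ₀..τ, Φ τ s (F s (x₀ s)))
              + ∫ s in τ..t, Φ t s (F s (x₀ s))) + Φ t τ ξ := by rw [hpull]
        _ = (Φ t τ (φstar τ ξ τ) + ∫ s in τ..t, Φ t s (F s (x₀ s))) + Φ t τ ξ := by
              rw [← hFixt τ hτ]
        _ = Φ t τ (x₀ τ) + ∫ r in τ..t, Φ t r (F r (x₀ r)) := by
              rw [hx₀τ, map_add]; abel
    have hsolx : ∀ s ∈ Set.Ici τ₀, x₀ s = sol s τ (x₀ τ) := huniq τ hτ x₀ hcontx₀ hmain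
    have hx₀τ' : x₀ τ = ξ + φstar τ ξ τ := by rw [hx₀τ, add_comm]
    have hintrw : (∫ s in τ₀..τ, Φ τ s (F s (sol s τ (ξ + φstar τ ξ τ))))
        = φstar τ ξ τ := by
      rw [← hx₀τ']
      have hcongr : (∫ s in τ₀..τ, Φ τ s (F s (sol s τ (x₀ τ))))
          = ∫ s in τ₀..τ, Φ τ s (F s (x₀ s)) := by
        apply intervalIntegral.integral_congr
        intro s hs
        have hs' : s ∈ Set.Icc τ₀ τ := by rwa [Set.uIcc_of_le hττ] at hs
        show (Φ τ s) (F s (sol s τ (x₀ τ))) = (Φ τ s) (F s (x₀ s))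
        rw [← hsolx s hs'.1]
      rw [hcongr]
      exact (hFixt τ hτ).symm
    rw [hintrw]
    abel
  have hGrep : ∀ η : X, η - ∫ s in τ₀..τ, Φ τ s (F s (sol s τ η))
      = Φ τ τ₀ (sol τ₀ τ η) := by
    intro η
    have h1 := hVOC τ₀ hτ₀ τ hτ (sol τ₀ τ η)
    have h2 : ∀ r ∈ Set.Ici τ₀, sol r τ₀ (sol τ₀ τ η) = sol r τ η :=
      fun r hr => (hsolGrp τ hτ τ₀ hτ₀ r hr η).symm
    have h3 : (∫ r in τ₀..τ, Φ τ r (F r (sol r τ₀ (sol τ₀ τ η))))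
        = ∫ r in τ₀..τ, Φ τ r (F r (sol r τ η)) := by
      apply intervalIntegral.integral_congr
      intro r hr
      have hr' : r ∈ Set.Icc τ₀ τ := by rwa [Set.uIcc_of_le hττ] at hr
      show (Φ τ r) (F r (sol r τ₀ (sol τ₀ τ η))) = (Φ τ r) (F r (sol r τ η))
      rw [h2 r hr'.1]
    rw [h2 τ hτ, hsolId τ hτ, h3] at h1
    exact sub_eq_of_eq_add h1
  refine ⟨?_, key⟩
  intro η
  have hg1 := hGrep η
  set ξ := η - ∫ s in τ₀..τ, Φ τ s (F s (sol s τ η)) with hξ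
  have hk := key ξ
  have hg2 := hGrep (ξ + φstar τ ξ τ)
  rw [hk] at hg2
  have heq : Φ τ τ₀ (sol τ₀ τ (ξ + φstar τ ξ τ)) = Φ τ τ₀ (sol τ₀ τ η) :=
    hg2.symm.trans hg1
  have hΦinv : ∀ y : X, Φ τ₀ τ (Φ τ τ₀ y) = y := by
    intro y
    have h := hΦcomp τ₀ hτ₀ τ hτ τ₀ hτ₀
    have h2 : Φ τ₀ τ₀ y = (Φ τ₀ τ).comp (Φ τ τ₀) y := by rw [← h]
    rw [hΦid τ₀ hτ₀] at h2
    exact h2.symm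
  have hsol1 : sol τ₀ τ (ξ + φstar τ ξ τ) = sol τ₀ τ η := by
    have hc := congrArg (Φ τ₀ τ) heq
    rwa [hΦinv, hΦinv] at hc
  have h4 : sol τ τ₀ (sol τ₀ τ (ξ + φstar τ ξ τ)) = sol τ τ₀ (sol τ₀ τ η) :=
    congrArg _ hsol1
  rw [← hsolGrp τ hτ τ₀ hτ₀ τ hτ, ← hsolGrp τ hτ τ₀ hτ₀ τ hτ] at h4
  rw [hsolId τ hτ, hsolId τ hτ] at h4
  exact h4
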